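/- Fix p ≥ 1, a discount factor γ ∈ [0, 1), and a reward distribution ν (a probability measure on ℝ with finite p-th moment). Let T(μ) = law of R + γG with R ~ ν and G ~ μ independent, and suppose μ* is a fixed point of T (T(μ*) = μ*). Then for every initial probability measure μ₀ on ℝ with finite p-th moment, the iterates μ_{k+1} = T(μ_k) satisfy W_p(μ_k, μ*) ≤ γ^k · W_p(μ₀, μ*) for all k ≥ 0; in particular, μ_k converges to μ* in p-Wasserstein distance at an exponential (geometric) rate governed by γ. -/

import Mathlib

open MeasureTheory Pointwise

/-- The `p`-Wasserstein distance between two measures on `ℝ`: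
`W_p(μ, ν) = (inf over couplings γ of μ and ν of ∫ |x - y|^p dγ)^(1/p)`. -/
noncomputable def wassersteinDist (p : ℝ) (μ ν : Measure ℝ) : ℝ :=
  (sInf {c : ℝ | ∃ γ : Measure (ℝ × ℝ), IsProbabilityMeasure γ ∧
      γ.map Prod.fst = μ ∧ γ.map Prod.snd = ν ∧
      c = ∫ q, |q.1 - q.2| ^ p ∂γ}) ^ (1 / p)

/-- The distributional Bellman-type operator: `bellmanOp ν γ μ` is the law of
`R + γ G` where `R ~ ν` and `G ~ μ` are independent. -/
noncomputable def bellmanOp (ν : Measure ℝ) (γ : ℝ) (μ : Measure ℝ) : Measure ℝ :=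
  (ν.prod (μ.map (fun x => γ * x))).map (fun q => q.1 + q.2)

/-- The coupling-cost set defining `wassersteinDist`. -/
def couplingSet (p : ℝ) (μ ν : Measure ℝ) : Set ℝ :=
  {c : ℝ | ∃ γ : Measure (ℝ × ℝ), IsProbabilityMeasure γ ∧
      γ.map Prod.fst = μ ∧ γ.map Prod.snd = ν ∧
      c = ∫ q, |q.1 - q.2| ^ p ∂γ}

lemma wassersteinDist_eq (p : ℝ) (μ ν : Measure ℝ) :
    wassersteinDist p μ ν = (sInf (couplingSet p μ ν)) ^ (1 / p) := rfl

lemma couplingSet_nonneg {p : ℝ} {μ ν : Measure ℝ} {c : ℝ} (hc : c ∈ couplingSet p μ ν) :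
    0 ≤ c := by
  obtain ⟨π, _, _, _, rfl⟩ := hc
  exact integral_nonneg fun q => Real.rpow_nonneg (abs_nonneg _) _

lemma couplingSet_bddBelow (p : ℝ) (μ ν : Measure ℝ) : BddBelow (couplingSet p μ ν) :=
  ⟨0, fun _ hc => couplingSet_nonneg hc⟩

lemma couplingSet_nonempty (p : ℝ) (μ ν : Measure ℝ) [IsProbabilityMeasure μ]
    [IsProbabilityMeasure ν] : (couplingSet p μ ν).Nonempty := by
  refine ⟨_, μ.prod ν, inferInstance, ?_, ?_, rfl⟩
  · simp [Measure.map_fst_prod]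
  · simp [Measure.map_snd_prod]

lemma sInf_couplingSet_nonneg (p : ℝ) (μ ν : Measure ℝ) [IsProbabilityMeasure μ]
    [IsProbabilityMeasure ν] : 0 ≤ sInf (couplingSet p μ ν) :=
  le_csInf (couplingSet_nonempty p μ ν) fun _ hc => couplingSet_nonneg hc

instance bellmanOp_isProbabilityMeasure (ν : Measure ℝ) [IsProbabilityMeasure ν]
    (γ : ℝ) (μ : Measure ℝ) [IsProbabilityMeasure μ] :
    IsProbabilityMeasure (bellmanOp ν γ μ) := by
  have h1 : IsProbabilityMeasure (μ.map (fun x => γ * x)) :=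
    Measure.isProbabilityMeasure_map (measurable_const_mul γ).aemeasurable
  exact Measure.isProbabilityMeasure_map measurable_add.aemeasurable

/-- `bellmanOp` applied as a map of a coupling. -/
lemma bellmanOp_eq_map (ν : Measure ℝ) [IsProbabilityMeasure ν] (γ : ℝ)
    (π : Measure (ℝ × ℝ)) [IsProbabilityMeasure π] (μ : Measure ℝ)
    (f : ℝ × ℝ → ℝ) (hf : Measurable f) (hπ : π.map f = μ) :
    bellmanOp ν γ μ = (ν.prod π).map (fun q => q.1 + γ * f q.2) := by
  have hmul : Measurable fun x : ℝ => γ * x := measurable_const_mul γ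
  have h1 : ν.prod (μ.map (fun x => γ * x)) =
      (ν.prod π).map (Prod.map id (fun x => γ * f x)) := by
    rw [← hπ, Measure.map_map hmul hf]
    have := Measure.map_prod_map (f := (id : ℝ → ℝ)) (g := fun x => γ * f x)
      ν π measurable_id (hmul.comp hf)
    rw [Measure.map_id] at this
    exact this
  rw [bellmanOp, h1, Measure.map_map measurable_add
    (measurable_id.prodMap (show Measurable fun x => γ * f x from hmul.comp hf))]
  rfl

/-- The key one-step contraction: `W_p(Tμ, Tμ') ≤ γ * W_p(μ, μ')`. -/
lemma bellmanOp_contraction (p : ℝ) (hp : 1 ≤ p) (γ : ℝ) (hγ0 : 0 ≤ γ)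
    (ν : Measure ℝ) [IsProbabilityMeasure ν]
    (μ μ' : Measure ℝ) [IsProbabilityMeasure μ] [IsProbabilityMeasure μ'] :
    wassersteinDist p (bellmanOp ν γ μ) (bellmanOp ν γ μ') ≤ γ * wassersteinDist p μ μ' := by
  have hp0 : (0:ℝ) < p := lt_of_lt_of_le one_pos hp
  have hγp : (0:ℝ) ≤ γ ^ p := Real.rpow_nonneg hγ0 p
  -- step 1: γ^p • couplingSet p μ μ' ⊆ couplingSet p (Tμ) (Tμ')
  have hsub : (γ ^ p) • couplingSet p μ μ' ⊆
      couplingSet p (bellmanOp ν γ μ) (bellmanOp ν γ μ') := by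
    rintro _ ⟨c, ⟨π, hπprob, hπ1, hπ2, rfl⟩, rfl⟩
    haveI := hπprob
    set Φ : ℝ × (ℝ × ℝ) → ℝ × ℝ := fun q => (q.1 + γ * q.2.1, q.1 + γ * q.2.2) with hΦdef
    have hΦ : Measurable Φ :=
      (measurable_fst.add (measurable_const.mul (measurable_fst.comp measurable_snd))).prodMk
        (measurable_fst.add (measurable_const.mul (measurable_snd.comp measurable_snd)))
    refine ⟨(ν.prod π).map Φ, Measure.isProbabilityMeasure_map hΦ.aemeasurable, ?_, ?_, ?_⟩
    · rw [Measure.map_map measurable_fst hΦ,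
        bellmanOp_eq_map ν γ π μ Prod.fst measurable_fst hπ1]
      rfl
    · rw [Measure.map_map measurable_snd hΦ,
        bellmanOp_eq_map ν γ π μ' Prod.snd measurable_snd hπ2]
      rfl
    · -- cost computation
      have hcost : Measurable fun q : ℝ × ℝ => |q.1 - q.2| ^ p :=
        (Real.continuous_rpow_const hp0.le).comp
          ((continuous_fst.sub continuous_snd).abs) |>.measurable
      rw [integral_map hΦ.aemeasurable hcost.aestronglyMeasurable]
      have heq : ∀ q : ℝ × (ℝ × ℝ),
          |(Φ q).1 - (Φ q).2| ^ p = γ ^ p * |q.2.1 - q.2.2| ^ p := by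
        intro q
        have : (Φ q).1 - (Φ q).2 = γ * (q.2.1 - q.2.2) := by
          simp only [hΦdef]; ring
        rw [this, abs_mul, abs_of_nonneg hγ0,
          Real.mul_rpow hγ0 (abs_nonneg _)]
      simp only [Function.comp] at *
      calc γ ^ p * ∫ q : ℝ × ℝ, |q.1 - q.2| ^ p ∂π
          = γ ^ p * ∫ q : ℝ × (ℝ × ℝ), |q.2.1 - q.2.2| ^ p ∂(ν.prod π) := by
            congr 1
            have hmap : (ν.prod π).map Prod.snd = π := by
              simp [Measure.map_snd_prod]
            have h2 := integral_map (μ := ν.prod π) (φ := Prod.snd)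
              measurable_snd.aemeasurable hcost.aestronglyMeasurable
            rw [hmap] at h2
            exact h2
        _ = ∫ q : ℝ × (ℝ × ℝ), |(Φ q).1 - (Φ q).2| ^ p ∂(ν.prod π) := by
            rw [← integral_const_mul]
            exact integral_congr_ae (Filter.Eventually.of_forall fun q => (heq q).symm)
  -- step 2: infimum comparison
  have hinf : sInf (couplingSet p (bellmanOp ν γ μ) (bellmanOp ν γ μ')) ≤
      γ ^ p * sInf (couplingSet p μ μ') := by
    have := csInf_le_csInf (couplingSet_bddBelow p _ _)
      ((couplingSet_nonempty p μ μ').smul_set (a := γ ^ p)) hsub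
    rwa [Real.sInf_smul_of_nonneg hγp, smul_eq_mul] at this
  -- step 3: take (1/p)-th powers
  rw [wassersteinDist_eq, wassersteinDist_eq]
  have h0 : 0 ≤ sInf (couplingSet p (bellmanOp ν γ μ) (bellmanOp ν γ μ')) :=
    sInf_couplingSet_nonneg p _ _
  calc sInf (couplingSet p (bellmanOp ν γ μ) (bellmanOp ν γ μ')) ^ (1/p)
      ≤ (γ ^ p * sInf (couplingSet p μ μ')) ^ (1/p) :=
        Real.rpow_le_rpow h0 hinf (by positivity)
    _ = γ * sInf (couplingSet p μ μ') ^ (1/p) := by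
        rw [Real.mul_rpow hγp (sInf_couplingSet_nonneg p μ μ'),
          ← Real.rpow_mul hγ0, mul_one_div, div_self hp0.ne', Real.rpow_one]

/-- **Exponential convergence of distributional Bellman iterates.** If `μ*` is a
fixed point of the Bellman operator, then the iterates `μ_{k+1} = T(μ_k)` satisfy
`W_p(μ_k, μ*) ≤ γ^k ⬝ W_p(μ₀, μ*)` for all `k ≥ 0`. -/
theorem bellmanOp_iterate_wassersteinDist_le (p : ℝ) (hp : 1 ≤ p)
    (γ : ℝ) (hγ0 : 0 ≤ γ) (hγ1 : γ < 1)
    (ν : Measure ℝ) [IsProbabilityMeasure ν] (hν : Integrable (fun x => |x| ^ p) ν)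
    (μstar : Measure ℝ) [IsProbabilityMeasure μstar]
    (hμstar : Integrable (fun x => |x| ^ p) μstar)
    (hfix : bellmanOp ν γ μstar = μstar)
    (μ₀ : Measure ℝ) [IsProbabilityMeasure μ₀]
    (hμ₀ : Integrable (fun x => |x| ^ p) μ₀) :
    ∀ k : ℕ, wassersteinDist p ((bellmanOp ν γ)^[k] μ₀) μstar ≤
      γ ^ k * wassersteinDist p μ₀ μstar := by
  have hprob : ∀ k : ℕ, IsProbabilityMeasure ((bellmanOp ν γ)^[k] μ₀) := by
    intro k
    induction k with
    | zero => simpa using inferInstanceAs (IsProbabilityMeasure μ₀)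
    | succ n ih =>
      rw [Function.iterate_succ_apply']
      exact @bellmanOp_isProbabilityMeasure ν _ γ _ ih
  intro k
  induction k with
  | zero => simp
  | succ n ih =>
    haveI := hprob n
    have step : wassersteinDist p ((bellmanOp ν γ)^[n+1] μ₀) μstar ≤
        γ * wassersteinDist p ((bellmanOp ν γ)^[n] μ₀) μstar := by
      rw [Function.iterate_succ_apply']
      calc wassersteinDist p (bellmanOp ν γ ((bellmanOp ν γ)^[n] μ₀)) μstar
          = wassersteinDist p (bellmanOp ν γ ((bellmanOp ν γ)^[n] μ₀))
              (bellmanOp ν γ μstar) := by rw [hfix]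
        _ ≤ γ * wassersteinDist p ((bellmanOp ν γ)^[n] μ₀) μstar :=
            bellmanOp_contraction p hp γ hγ0 ν _ _
    calc wassersteinDist p ((bellmanOp ν γ)^[n+1] μ₀) μstar
        ≤ γ * wassersteinDist p ((bellmanOp ν γ)^[n] μ₀) μstar := step
      _ ≤ γ * (γ ^ n * wassersteinDist p μ₀ μstar) := by
          exact mul_le_mul_of_nonneg_left ih hγ0
      _ = γ ^ (n+1) * wassersteinDist p μ₀ μstar := by ring
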